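/- With the Yule model setup, Var(τ^{(n)}) = ((n+1)/(n-1)) H_{n,2} − (2(n+1)/(n-1)^2) H_{n,1}^2 + (4(n+1)/(n-1)^2) H_{n,1} − 4/(n-1) − 4/(n-1)^2, and consequently Var(τ^{(n)}) → π²/6 as n → ∞. -/

import Mathlib

open MeasureTheory ProbabilityTheory Finset Real Filter
open scoped NNReal ENNReal

namespace VarCoal

open Set in
lemma integrable_and_integral_pow_mul_exp (r : ℝ) (hr : 0 < r) (k : ℕ) :
    IntegrableOn (fun t : ℝ => t ^ k * Real.exp (-(r * t))) (Set.Ioi 0) ∧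
    ∫ t in Set.Ioi 0, t ^ k * Real.exp (-(r * t)) = (k.factorial : ℝ) / r ^ (k+1) := by
  have key : ∫ t in Set.Ioi 0, t ^ k * Real.exp (-(r * t)) = (k.factorial : ℝ) / r ^ (k+1) := by
    have h := Real.integral_rpow_mul_exp_neg_mul_Ioi (a := (k:ℝ)+1) (by positivity) hr
    have hcongr : ∀ t ∈ Ioi (0:ℝ), t ^ ((k:ℝ)+1-1) * Real.exp (-(r*t)) = t ^ k * Real.exp (-(r*t)) := by
      intro t ht
      rw [add_sub_cancel_right, Real.rpow_natCast]
    rw [setIntegral_congr_fun measurableSet_Ioi hcongr] at h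
    rw [h]
    rw [show ((k:ℝ)+1) = ((k+1 : ℕ) : ℝ) by push_cast; ring, Real.rpow_natCast]
    rw [show (((k+1:ℕ)):ℝ) = (k:ℝ)+1 by push_cast; ring, Real.Gamma_nat_eq_factorial]
    field_simp
    rw [← mul_pow, one_div, inv_mul_cancel₀ hr.ne', one_pow]
  refine ⟨?_, key⟩
  by_contra hcon
  rw [MeasureTheory.integral_undef hcon] at key
  have : (0:ℝ) < (k.factorial : ℝ) / r ^ (k+1) := by positivity
  rw [← key] at this
  exact lt_irrefl _ this

open Set in
lemma expMeasure_moment (r : ℝ) (hr : 0 < r) (k : ℕ) :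
    Integrable (fun x => x ^ k) (expMeasure r) ∧
    ∫ x, x ^ k ∂(expMeasure r) = (k.factorial : ℝ) / r ^ k := by
  obtain ⟨hint, hval⟩ := integrable_and_integral_pow_mul_exp r hr k
  set f : ℝ → ℝ≥0 := fun x => (exponentialPDFReal r x).toNNReal with hf
  have hfmeas : Measurable f := (measurable_exponentialPDFReal r).real_toNNReal
  have hμ : expMeasure r = volume.withDensity (fun x => (f x : ℝ≥0∞)) := by
    rfl
  have hsmul : ∀ x : ℝ, f x • (x ^ k) = x ^ k * (if 0 ≤ x then r * Real.exp (-(r * x)) else 0) := by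
    intro x
    have : exponentialPDFReal r x = if 0 ≤ x then r * Real.exp (-(r * x)) else 0 := by
      rw [exponentialPDFReal, gammaPDFReal]
      simp only [rpow_one, Real.Gamma_one, div_one, sub_self, rpow_zero, mul_one]
    rw [hf]
    simp only [NNReal.smul_def, smul_eq_mul]
    rw [Real.coe_toNNReal _ (exponentialPDFReal_nonneg hr x), this]
    ring
  have hind : (fun x : ℝ => x ^ k * (if 0 ≤ x then r * Real.exp (-(r * x)) else 0))
      = Set.indicator (Ici 0) (fun x => x ^ k * (r * Real.exp (-(r * x)))) := by
    funext x
    by_cases hx : (0:ℝ) ≤ x <;> simp [Set.indicator_apply, hx]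
  have hIoncore : IntegrableOn (fun x : ℝ => x ^ k * (r * Real.exp (-(r * x)))) (Ici 0) := by
    rw [integrableOn_Ici_iff_integrableOn_Ioi]
    exact (hint.const_mul r).congr (Filter.Eventually.of_forall fun x => by ring)
  have hInt2 : Integrable (fun x : ℝ => x ^ k * (if 0 ≤ x then r * Real.exp (-(r * x)) else 0)) volume := by
    rw [hind, integrable_indicator_iff measurableSet_Ici]
    exact hIoncore
  constructor
  · rw [hμ]
    rw [integrable_withDensity_iff_integrable_smul hfmeas]
    exact hInt2.congr (Filter.Eventually.of_forall fun x => (hsmul x).symm)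
  · rw [hμ, integral_withDensity_eq_integral_smul hfmeas]
    calc ∫ x, f x • (x ^ k) = ∫ x, x ^ k * (if 0 ≤ x then r * Real.exp (-(r * x)) else 0) :=
          integral_congr_ae (Filter.Eventually.of_forall hsmul)
    _ = ∫ x in Ici 0, x ^ k * (r * Real.exp (-(r * x))) := by
          rw [hind, integral_indicator measurableSet_Ici]
    _ = ∫ x in Ioi 0, x ^ k * (r * Real.exp (-(r * x))) := by
          rw [← integral_Ici_eq_integral_Ioi]
    _ = r * ∫ x in Ioi 0, x ^ k * Real.exp (-(r * x)) := by
          rw [← integral_const_mul]; congr 1; funext x; ring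
    _ = (k.factorial : ℝ) / r ^ k := by
          rw [hval]; field_simp; ring

lemma moment_of_map {Ω : Type*} [MeasurableSpace Ω] {P : Measure Ω} {X : Ω → ℝ}
    (hX : Measurable X) {r : ℝ} (hr : 0 < r) (hmap : P.map X = expMeasure r) (k : ℕ) :
    Integrable (fun ω => X ω ^ k) P ∧ ∫ ω, X ω ^ k ∂P = (k.factorial : ℝ) / r ^ k := by
  obtain ⟨hint, hval⟩ := expMeasure_moment r hr k
  rw [← hmap] at hint hval
  have hg : Measurable (fun x : ℝ => x ^ k) := measurable_id.pow_const k
  constructor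
  · exact (integrable_map_measure hg.aestronglyMeasurable hX.aemeasurable).mp hint
  · rw [integral_map hX.aemeasurable hg.aestronglyMeasurable] at hval
    exact hval

lemma memLp2_of_map {Ω : Type*} [MeasurableSpace Ω] {P : Measure Ω} {X : Ω → ℝ}
    (hX : Measurable X) {r : ℝ} (hr : 0 < r) (hmap : P.map X = expMeasure r) :
    MemLp X 2 P := by
  have h2 := (moment_of_map hX hr hmap 2).1
  exact (memLp_two_iff_integrable_sq hX.aestronglyMeasurable).mpr h2

lemma sum_ite_mul_eq {s : Finset ℕ} {b : ℕ} (hb : b ∈ s) (G : ℕ → ℝ) :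
    ∑ k ∈ s, (if b = k then (1:ℝ) else 0) * G k = G b := by
  have : ∀ k ∈ s, (if b = k then (1:ℝ) else 0) * G k = if b = k then G k else 0 := by
    intro k _; split_ifs <;> simp
  rw [Finset.sum_congr rfl this, Finset.sum_ite_eq, if_pos hb]

lemma moment2_sum {Ω : Type*} [MeasurableSpace Ω] {P : Measure Ω} [IsProbabilityMeasure P]
    (T : ℕ → Ω → ℝ)
    (hTindep : iIndepFun T P)
    (s : Finset ℕ) (a : ℕ → ℝ)
    (h1 : ∀ i ∈ s, Integrable (T i) P) (h1v : ∀ i ∈ s, ∫ ω, T i ω ∂P = a i)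
    (h2 : ∀ i ∈ s, Integrable (fun ω => T i ω ^ 2) P)
    (h2v : ∀ i ∈ s, ∫ ω, T i ω ^ 2 ∂P = 2 * a i ^ 2) :
    ∫ ω, (∑ i ∈ s, T i ω) ^ 2 ∂P = (∑ i ∈ s, a i ^ 2) + (∑ i ∈ s, a i) ^ 2 := by
  have hpair : ∀ i ∈ s, ∀ j ∈ s, Integrable (fun ω => T i ω * T j ω) P := by
    intro i hi j hj
    rcases eq_or_ne i j with rfl | hne
    · exact (h2 i hi).congr (Filter.Eventually.of_forall fun ω => by simp [sq])
    · exact ((hTindep.indepFun hne).integrable_mul (h1 i hi) (h1 j hj))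
  have hpairv : ∀ i ∈ s, ∀ j ∈ s, ∫ ω, T i ω * T j ω ∂P
      = a i * a j + (if i = j then a i ^ 2 else 0) := by
    intro i hi j hj
    rcases eq_or_ne i j with rfl | hne
    · rw [if_pos rfl]
      calc ∫ ω, T i ω * T i ω ∂P = ∫ ω, T i ω ^ 2 ∂P := by
            congr 1; funext ω; rw [sq]
        _ = a i * a i + a i ^ 2 := by rw [h2v i hi]; ring
    · rw [if_neg hne, add_zero]
      have := (hTindep.indepFun hne).integral_mul_eq_mul_integral (h1 i hi).aestronglyMeasurable (h1 j hj).aestronglyMeasurable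
      calc ∫ ω, T i ω * T j ω ∂P = ∫ ω, (T i * T j) ω ∂P := rfl
        _ = (∫ ω, T i ω ∂P) * ∫ ω, T j ω ∂P := this
        _ = a i * a j := by rw [h1v i hi, h1v j hj]
  calc ∫ ω, (∑ i ∈ s, T i ω) ^ 2 ∂P
      = ∫ ω, ∑ i ∈ s, ∑ j ∈ s, T i ω * T j ω ∂P := by
        congr 1; funext ω; rw [sq, Finset.sum_mul_sum]
    _ = ∑ i ∈ s, ∫ ω, ∑ j ∈ s, T i ω * T j ω ∂P := by
        refine integral_finset_sum s fun i hi => ?_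
        exact integrable_finset_sum s fun j hj => hpair i hi j hj
    _ = ∑ i ∈ s, ∑ j ∈ s, ∫ ω, T i ω * T j ω ∂P := by
        refine Finset.sum_congr rfl fun i hi => ?_
        exact integral_finset_sum s fun j hj => hpair i hi j hj
    _ = ∑ i ∈ s, ∑ j ∈ s, (a i * a j + if i = j then a i ^ 2 else 0) := by
        exact Finset.sum_congr rfl fun i hi => Finset.sum_congr rfl fun j hj => hpairv i hi j hj
    _ = (∑ i ∈ s, a i ^ 2) + (∑ i ∈ s, a i) ^ 2 := by
        rw [sq]
        simp only [Finset.sum_add_distrib, ← Finset.mul_sum]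
        rw [← Finset.sum_mul]
        have : ∀ i ∈ s, (∑ j ∈ s, if i = j then a i ^ 2 else 0) = a i ^ 2 := by
          intro i hi
          rw [Finset.sum_ite_eq, if_pos hi]
        rw [Finset.sum_congr rfl this]
        ring

lemma sum_linear (s : Finset ℕ) (p g h : ℕ → ℝ) (c₁ c₂ c₃ c₄ : ℝ) :
    ∑ k ∈ s, p k * (c₁ + c₂ * g k + c₃ * h k + c₄ * (g k)^2)
      = c₁ * (∑ k ∈ s, p k) + c₂ * (∑ k ∈ s, p k * g k)
        + c₃ * (∑ k ∈ s, p k * h k) + c₄ * (∑ k ∈ s, p k * (g k)^2) := by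
  simp only [Finset.mul_sum]
  rw [← Finset.sum_add_distrib, ← Finset.sum_add_distrib, ← Finset.sum_add_distrib]
  exact Finset.sum_congr rfl fun k _ => by ring

lemma sums_closed (m : ℕ) (hm : 1 ≤ m) :
    (∑ k ∈ Icc 1 m, (1:ℝ)/(((k:ℝ)+1)*((k:ℝ)+2)) = (m:ℝ)/(2*((m:ℝ)+2))) ∧
    (∑ k ∈ Icc 1 m, (1:ℝ)/(((k:ℝ)+1)*((k:ℝ)+2)) * (∑ i ∈ Icc 1 k, (1:ℝ)/i)
      = ((m:ℝ)+1)/((m:ℝ)+2) - ((∑ i ∈ Icc 1 m, (1:ℝ)/i) + 1/((m:ℝ)+1))/((m:ℝ)+2)) ∧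
    (∑ k ∈ Icc 1 m, (1:ℝ)/(((k:ℝ)+1)*((k:ℝ)+2)) * (∑ i ∈ Icc 1 k, (1:ℝ)/(i:ℝ)^2)
      = (((m:ℝ)+1)/((m:ℝ)+2)) * ((∑ i ∈ Icc 1 m, (1:ℝ)/(i:ℝ)^2) + 1/((m:ℝ)+1)^2 - 1)) ∧
    (∑ k ∈ Icc 1 m, (1:ℝ)/(((k:ℝ)+1)*((k:ℝ)+2)) * (∑ i ∈ Icc 1 k, (1:ℝ)/i)^2
      = ((∑ i ∈ Icc 1 m, (1:ℝ)/(i:ℝ)^2) + 1/((m:ℝ)+1)^2) + 1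
        - ((∑ i ∈ Icc 1 m, (1:ℝ)/i) + 1/((m:ℝ)+1))^2/((m:ℝ)+2)
        - 2*((∑ i ∈ Icc 1 m, (1:ℝ)/i) + 1/((m:ℝ)+1))/((m:ℝ)+2) - 1/((m:ℝ)+2)) := by
  induction m, hm using Nat.le_induction with
  | base => norm_num
  | succ m hm ih =>
    obtain ⟨ihA, ihB, ihC, ihD⟩ := ih
    have h1 : 1 ≤ m + 1 := by omega
    have c1 : ((m:ℝ)+1) ≠ 0 := by positivity
    have c2 : ((m:ℝ)+2) ≠ 0 := by positivity
    have c3 : ((m:ℝ)+3) ≠ 0 := by positivity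
    rw [Finset.sum_Icc_succ_top h1, Finset.sum_Icc_succ_top h1, Finset.sum_Icc_succ_top h1,
      Finset.sum_Icc_succ_top h1, Finset.sum_Icc_succ_top h1, Finset.sum_Icc_succ_top h1,
      Finset.sum_Icc_succ_top h1]
    rw [ihA, ihB, ihC, ihD]
    push_cast
    refine ⟨by field_simp; ring, by field_simp; ring, by field_simp; ring, by field_simp; ring⟩


lemma harmonic_sum_le (m : ℕ) :
    ∑ i ∈ Icc 1 m, (1:ℝ)/(i:ℝ) ≤ 1 + Real.log m := by
  have h1 : ∑ i ∈ Icc 1 m, (1:ℝ)/(i:ℝ) = ((harmonic m : ℚ) : ℝ) := by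
    rw [harmonic]
    push_cast
    rw [← Finset.Ico_add_one_right_eq_Icc, Finset.sum_Ico_eq_sum_range]
    norm_num
    refine Finset.sum_congr rfl fun i _ => ?_
    push_cast
    rw [add_comm]
  rw [h1]
  exact harmonic_le_one_add_log m

lemma tendsto_aux (j : ℕ) :
    Tendsto (fun m : ℕ => ((m:ℝ)+1)/((m:ℝ)-1)^2 * (∑ i ∈ Icc 1 m, (1:ℝ)/(i:ℝ))^j)
      atTop (nhds 0) := by
  have hm_atTop : Tendsto (fun m : ℕ => (m:ℝ)) atTop atTop := tendsto_natCast_atTop_atTop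
  -- the dominating sequence
  have hM : Tendsto (fun m : ℕ => 8 * Real.log (Real.exp 1 * m) ^ j / m) atTop (nhds 0) := by
    have h0 := Real.tendsto_pow_log_div_mul_add_atTop (Real.exp 1)⁻¹ 0 j
      (by positivity)
    have h1 : Tendsto (fun m : ℕ => Real.exp 1 * (m:ℝ)) atTop atTop :=
      hm_atTop.const_mul_atTop (Real.exp_pos 1)
    have h2 := h0.comp h1
    have h3 : Tendsto (fun m : ℕ => Real.log (Real.exp 1 * m) ^ j / m) atTop (nhds 0) := by
      refine h2.congr fun m => ?_
      simp only [Function.comp_apply, add_zero]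
      rw [inv_mul_cancel_left₀ (Real.exp_ne_zero 1)]
    have := h3.const_mul (8:ℝ)
    simpa [mul_div_assoc] using this
  refine squeeze_zero' ?_ ?_ hM
  · filter_upwards [eventually_ge_atTop 1] with m hm
    have : (0:ℝ) ≤ (m:ℝ) - 1 := by
      have : (1:ℝ) ≤ m := by exact_mod_cast hm
      linarith
    have hs : (0:ℝ) ≤ ∑ i ∈ Icc 1 m, (1:ℝ)/(i:ℝ) :=
      Finset.sum_nonneg fun i _ => by positivity
    positivity
  · filter_upwards [eventually_ge_atTop 2] with m hm
    have hm2 : (2:ℝ) ≤ (m:ℝ) := by exact_mod_cast hm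
    have hmpos : (0:ℝ) < m := by linarith
    have hfrac : ((m:ℝ)+1)/((m:ℝ)-1)^2 ≤ 8/(m:ℝ) := by
      rw [div_le_div_iff₀ (by nlinarith) hmpos]
      nlinarith
    have hs0 : (0:ℝ) ≤ ∑ i ∈ Icc 1 m, (1:ℝ)/(i:ℝ) :=
      Finset.sum_nonneg fun i _ => by positivity
    have hlog : ∑ i ∈ Icc 1 m, (1:ℝ)/(i:ℝ) ≤ Real.log (Real.exp 1 * m) := by
      rw [Real.log_mul (Real.exp_ne_zero 1) (by linarith), Real.log_exp]
      exact harmonic_sum_le m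
    have hpow : (∑ i ∈ Icc 1 m, (1:ℝ)/(i:ℝ))^j ≤ Real.log (Real.exp 1 * m) ^ j :=
      pow_le_pow_left₀ hs0 hlog j
    calc ((m:ℝ)+1)/((m:ℝ)-1)^2 * (∑ i ∈ Icc 1 m, (1:ℝ)/(i:ℝ))^j
        ≤ (8/(m:ℝ)) * Real.log (Real.exp 1 * m) ^ j := by
          refine mul_le_mul hfrac hpow (by positivity) (by positivity)
      _ = 8 * Real.log (Real.exp 1 * m) ^ j / m := by ring

lemma limit_part :
    Tendsto (fun m : ℕ =>
        ((m : ℝ) + 1) / ((m : ℝ) - 1) * (∑ i ∈ Finset.Icc 1 m, (1 : ℝ) / (i : ℝ) ^ 2)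
          - 2 * ((m : ℝ) + 1) / ((m : ℝ) - 1) ^ 2 * (∑ i ∈ Finset.Icc 1 m, (1 : ℝ) / i) ^ 2
          + 4 * ((m : ℝ) + 1) / ((m : ℝ) - 1) ^ 2 * (∑ i ∈ Finset.Icc 1 m, (1 : ℝ) / i)
          - 4 / ((m : ℝ) - 1) - 4 / ((m : ℝ) - 1) ^ 2)
      atTop (nhds (Real.pi ^ 2 / 6)) := by
  have hm_atTop : Tendsto (fun m : ℕ => (m:ℝ)) atTop atTop := tendsto_natCast_atTop_atTop
  have hsub1 : Tendsto (fun m : ℕ => (m:ℝ) - 1) atTop atTop := by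
    simpa [sub_eq_add_neg] using tendsto_atTop_add_const_right atTop (-1 : ℝ) hm_atTop
  have hinv : Tendsto (fun m : ℕ => ((m:ℝ) - 1)⁻¹) atTop (nhds 0) :=
    hsub1.inv_tendsto_atTop
  have hsq : Tendsto (fun m : ℕ => (((m:ℝ) - 1)^2)⁻¹) atTop (nhds 0) := by
    have : Tendsto (fun m : ℕ => ((m:ℝ) - 1)^2) atTop atTop := by
      simpa [sq] using hsub1.atTop_mul_atTop₀ hsub1
    exact this.inv_tendsto_atTop
  -- t1
  have t1 : Tendsto (fun m : ℕ => ((m:ℝ)+1)/((m:ℝ)-1)) atTop (nhds 1) := by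
    have h := (tendsto_const_nhds (x := (1:ℝ)) (f := atTop)).add (hinv.const_mul 2)
    rw [mul_zero, add_zero] at h
    refine h.congr' ?_
    filter_upwards [eventually_ge_atTop 2] with m hm
    have hm2 : (2:ℝ) ≤ (m:ℝ) := by exact_mod_cast hm
    have : ((m:ℝ) - 1) ≠ 0 := by linarith
    field_simp
    ring
  -- t2
  have t2 : Tendsto (fun m : ℕ => ∑ i ∈ Finset.Icc 1 m, (1:ℝ)/(i:ℝ)^2)
      atTop (nhds (Real.pi^2/6)) := by
    have hz := hasSum_zeta_two.tendsto_sum_nat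
    have h1 := hz.comp (tendsto_add_atTop_nat 1)
    refine h1.congr fun m => ?_
    simp only [Function.comp_apply]
    rw [Finset.sum_range_succ' (fun i : ℕ => (1:ℝ)/(i:ℝ)^2) m]
    rw [← Finset.Ico_add_one_right_eq_Icc, Finset.sum_Ico_eq_sum_range]
    norm_num
    exact Finset.sum_congr rfl fun i _ => by rw [add_comm]
  -- t3 t4
  have t3 : Tendsto (fun m : ℕ =>
      2 * ((m:ℝ)+1)/((m:ℝ)-1)^2 * (∑ i ∈ Finset.Icc 1 m, (1:ℝ)/(i:ℝ))^2) atTop (nhds 0) := by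
    have := (tendsto_aux 2).const_mul (2:ℝ)
    rw [mul_zero] at this
    exact this.congr fun m => by ring
  have t4 : Tendsto (fun m : ℕ =>
      4 * ((m:ℝ)+1)/((m:ℝ)-1)^2 * (∑ i ∈ Finset.Icc 1 m, (1:ℝ)/(i:ℝ))) atTop (nhds 0) := by
    have := (tendsto_aux 1).const_mul (4:ℝ)
    rw [mul_zero] at this
    exact this.congr fun m => by rw [pow_one] at *; ring
  have t5 : Tendsto (fun m : ℕ => 4/((m:ℝ)-1)) atTop (nhds 0) := by
    have := hinv.const_mul (4:ℝ)
    rw [mul_zero] at this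
    exact this.congr fun m => by rw [div_eq_mul_inv]
  have t6 : Tendsto (fun m : ℕ => 4/((m:ℝ)-1)^2) atTop (nhds 0) := by
    have := hsq.const_mul (4:ℝ)
    rw [mul_zero] at this
    exact this.congr fun m => by rw [div_eq_mul_inv]
  have final := ((((t1.mul t2).sub t3).add t4).sub t5).sub t6
  have hval : (1 * (Real.pi^2/6) - 0 + 0 - 0 - 0 : ℝ) = Real.pi^2/6 := by ring
  rw [hval] at final
  exact final


end VarCoal

open VarCoal

theorem variance_coalescent_time
    {Ω : Type*} [MeasurableSpace Ω] {P : Measure Ω} [IsProbabilityMeasure P]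
    (n : ℕ) (hn : 2 ≤ n)
    (T : ℕ → Ω → ℝ) (κ : Ω → ℕ)
    (hTmeas : ∀ i, Measurable (T i)) (hκmeas : Measurable κ)
    (hTindep : iIndepFun T P)
    (hTdist : ∀ i ∈ Finset.Icc 1 n, P.map (T i) = expMeasure i)
    (hκrange : ∀ ω, κ ω ∈ Finset.Icc 1 (n - 1))
    (hκdist : ∀ k ∈ Finset.Icc 1 (n - 1),
      P {ω | κ ω = k} =
        ENNReal.ofReal ((2 * ((n : ℝ) + 1) / ((n : ℝ) - 1)) *
          (1 / (((k : ℝ) + 1) * ((k : ℝ) + 2)))))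
    (hindep : IndepFun κ (fun ω i => T i ω) P)
    (H1 H2 : ℝ)
    (hH1 : H1 = ∑ i ∈ Finset.Icc 1 n, (1 : ℝ) / i)
    (hH2 : H2 = ∑ i ∈ Finset.Icc 1 n, (1 : ℝ) / (i : ℝ) ^ 2) :
    (variance (fun ω => ∑ i ∈ Finset.Icc (κ ω + 1) n, T i ω) P =
      ((n : ℝ) + 1) / ((n : ℝ) - 1) * H2
        - 2 * ((n : ℝ) + 1) / ((n : ℝ) - 1) ^ 2 * H1 ^ 2
        + 4 * ((n : ℝ) + 1) / ((n : ℝ) - 1) ^ 2 * H1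
        - 4 / ((n : ℝ) - 1) - 4 / ((n : ℝ) - 1) ^ 2) ∧
    Filter.Tendsto (fun m : ℕ =>
        ((m : ℝ) + 1) / ((m : ℝ) - 1) * (∑ i ∈ Finset.Icc 1 m, (1 : ℝ) / (i : ℝ) ^ 2)
          - 2 * ((m : ℝ) + 1) / ((m : ℝ) - 1) ^ 2 * (∑ i ∈ Finset.Icc 1 m, (1 : ℝ) / i) ^ 2
          + 4 * ((m : ℝ) + 1) / ((m : ℝ) - 1) ^ 2 * (∑ i ∈ Finset.Icc 1 m, (1 : ℝ) / i)
          - 4 / ((m : ℝ) - 1) - 4 / ((m : ℝ) - 1) ^ 2)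
      Filter.atTop (nhds (Real.pi ^ 2 / 6)) := by
  constructor
  · subst hH1 hH2
    obtain ⟨m, hm1, rfl⟩ : ∃ m, 1 ≤ m ∧ n = m + 1 := ⟨n-1, by omega, by omega⟩
    simp only [Nat.add_sub_cancel] at hκrange hκdist
    -- basic positivity
    have hm1R : (1:ℝ) ≤ (m:ℝ) := by exact_mod_cast hm1
    -- per-coordinate facts
    have key : ∀ i ∈ Finset.Icc 1 (m+1),
        Integrable (T i) P ∧ (∫ ω, T i ω ∂P = 1/(i:ℝ)) ∧
        Integrable (fun ω => T i ω ^ 2) P ∧ (∫ ω, T i ω ^ 2 ∂P = 2 * (1/(i:ℝ))^2) ∧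
        MemLp (T i) 2 P := by
      intro i hi
      have hipos : (0:ℝ) < (i:ℝ) := by
        have := (Finset.mem_Icc.mp hi).1
        exact_mod_cast Nat.lt_of_lt_of_le Nat.zero_lt_one this
      have h1 := moment_of_map (hTmeas i) hipos (hTdist i hi) 1
      have h2 := moment_of_map (hTmeas i) hipos (hTdist i hi) 2
      simp only [pow_one, Nat.factorial_one, Nat.factorial_two, Nat.cast_one, Nat.cast_ofNat] at h1 h2
      refine ⟨h1.1, h1.2, h2.1, ?_, memLp2_of_map (hTmeas i) hipos (hTdist i hi)⟩
      rw [h2.2]; field_simp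
    -- the partial-tail sums S k
    set S : ℕ → Ω → ℝ := fun k ω => ∑ i ∈ Finset.Icc (k+1) (m+1), T i ω with hSdef
    have hsub : ∀ k : ℕ, Finset.Icc (k+1) (m+1) ⊆ Finset.Icc 1 (m+1) := by
      intro k
      exact Finset.Icc_subset_Icc (by omega) le_rfl
    have hSkint : ∀ k, Integrable (S k) P := fun k =>
      integrable_finset_sum _ (fun i hi => (key i (hsub k hi)).1)
    have hSkmean : ∀ k, ∫ ω, S k ω ∂P = ∑ i ∈ Finset.Icc (k+1) (m+1), 1/(i:ℝ) := by
      intro k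
      rw [hSdef]
      rw [integral_finset_sum _ (fun i hi => (key i (hsub k hi)).1)]
      exact Finset.sum_congr rfl fun i hi => (key i (hsub k hi)).2.1
    have hSkmem : ∀ k, MemLp (S k) 2 P := fun k =>
      memLp_finset_sum _ (fun i hi => (key i (hsub k hi)).2.2.2.2)
    have hSksq_int : ∀ k, Integrable (fun ω => S k ω ^ 2) P := fun k =>
      (hSkmem k).integrable_sq
    have hSksq_val : ∀ k, ∫ ω, S k ω ^ 2 ∂P
        = (∑ i ∈ Finset.Icc (k+1) (m+1), (1/(i:ℝ))^2)
          + (∑ i ∈ Finset.Icc (k+1) (m+1), 1/(i:ℝ))^2 := by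
      intro k
      exact moment2_sum T hTindep _ (fun i => 1/(i:ℝ))
        (fun i hi => (key i (hsub k hi)).1) (fun i hi => (key i (hsub k hi)).2.1)
        (fun i hi => (key i (hsub k hi)).2.2.1) (fun i hi => (key i (hsub k hi)).2.2.2.1)
    -- indicator functions
    set I : ℕ → Ω → ℝ := fun k ω => if κ ω = k then 1 else 0 with hIdef
    have hImeas : ∀ k, Measurable (I k) := by
      intro k
      exact (measurable_from_top (f := fun j : ℕ => if j = k then (1:ℝ) else 0)).comp hκmeas
    have hIint : ∀ k, Integrable (I k) P := by
      intro k
      refine (integrable_const (1:ℝ)).mono' (hImeas k).aestronglyMeasurable ?_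
      refine Filter.Eventually.of_forall fun ω => ?_
      rw [hIdef]; simp only [norm_one]
      split_ifs <;> simp
    have hIval : ∀ k, ∫ ω, I k ω ∂P = (P {ω | κ ω = k}).toReal := by
      intro k
      have hms : MeasurableSet {ω | κ ω = k} := hκmeas (measurableSet_singleton k)
      have : I k = Set.indicator {ω | κ ω = k} (fun _ => (1:ℝ)) := by
        funext ω
        rw [hIdef]
        simp [Set.indicator_apply, Set.mem_setOf_eq]
      rw [this, integral_indicator hms, setIntegral_const, smul_eq_mul, mul_one, measureReal_def]
    -- independence of I k and S k (and S k ^ 2)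
    have hkind1 : ∀ k, IndepFun (I k) (S k) P := by
      intro k
      have hφ : Measurable (fun j : ℕ => if j = k then (1:ℝ) else 0) := measurable_from_top
      have hψ : Measurable (fun f : ℕ → ℝ => ∑ i ∈ Finset.Icc (k+1) (m+1), f i) :=
        Finset.measurable_sum _ (fun i _ => measurable_pi_apply i)
      exact hindep.comp hφ hψ
    have hkind2 : ∀ k, IndepFun (I k) (fun ω => S k ω ^ 2) P := by
      intro k
      have hφ : Measurable (fun j : ℕ => if j = k then (1:ℝ) else 0) := measurable_from_top
      have hψ : Measurable (fun f : ℕ → ℝ => (∑ i ∈ Finset.Icc (k+1) (m+1), f i)^2) :=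
        (Finset.measurable_sum _ (fun i _ => measurable_pi_apply i)).pow_const 2
      exact hindep.comp hφ hψ
    -- decomposition of X and X^2
    set X : Ω → ℝ := fun ω => ∑ i ∈ Finset.Icc (κ ω + 1) (m+1), T i ω with hXdef
    have hXeq : X = fun ω => ∑ k ∈ Finset.Icc 1 m, I k ω * S k ω := by
      funext ω
      exact (sum_ite_mul_eq (hκrange ω) (fun k => S k ω)).symm
    have hX2eq : (X^2 : Ω → ℝ) = fun ω => ∑ k ∈ Finset.Icc 1 m, I k ω * (S k ω)^2 := by
      funext ω
      have : (X^2 : Ω → ℝ) ω = (S (κ ω) ω)^2 := rfl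
      rw [this]
      exact (sum_ite_mul_eq (hκrange ω) (fun k => (S k ω)^2)).symm
    -- integrability of the terms
    have hterm1_int : ∀ k, Integrable (fun ω => I k ω * S k ω) P := fun k =>
      (hkind1 k).integrable_mul (hIint k) (hSkint k)
    have hterm2_int : ∀ k, Integrable (fun ω => I k ω * S k ω ^ 2) P := fun k =>
      (hkind2 k).integrable_mul (hIint k) (hSksq_int k)
    -- MemLp X 2
    have hSmeas : ∀ k, Measurable (S k) := fun k =>
      Finset.measurable_sum _ (fun i _ => hTmeas i)
    have hXmem : MemLp X 2 P := by
      rw [hXeq]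
      refine memLp_finset_sum _ (fun k _ => ?_)
      refine (hSkmem k).of_le ((hImeas k).mul (hSmeas k)).aestronglyMeasurable ?_
      refine Filter.Eventually.of_forall fun ω => ?_
      rw [norm_mul]
      have : ‖I k ω‖ ≤ 1 := by
        rw [hIdef]; simp only; split_ifs <;> simp
      calc ‖I k ω‖ * ‖S k ω‖ ≤ 1 * ‖S k ω‖ :=
            mul_le_mul_of_nonneg_right this (norm_nonneg _)
        _ = ‖S k ω‖ := one_mul _
    -- probabilities
    have hprob : ∀ k ∈ Finset.Icc 1 m, (P {ω | κ ω = k}).toReal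
        = 2 * ((m:ℝ)+2) / ((m:ℝ)) * (1/(((k:ℝ)+1)*((k:ℝ)+2))) := by
      intro k hk
      rw [hκdist k hk, ENNReal.toReal_ofReal]
      · push_cast; ring_nf
      · have hk1 : (0:ℝ) < (k:ℝ)+1 := by positivity
        have hk2 : (0:ℝ) < (k:ℝ)+2 := by positivity
        have hnm : (0:ℝ) < ((m+1:ℕ):ℝ) - 1 := by push_cast; linarith
        have hnp : (0:ℝ) < ((m+1:ℕ):ℝ) + 1 := by positivity
        positivity
    -- expectation of X
    have hEX : ∫ ω, X ω ∂P = ∑ k ∈ Finset.Icc 1 m,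
        (2 * ((m:ℝ)+2) / (m:ℝ) * (1/(((k:ℝ)+1)*((k:ℝ)+2))))
          * (∑ i ∈ Finset.Icc (k+1) (m+1), 1/(i:ℝ)) := by
      rw [hXeq, integral_finset_sum _ (fun k _ => hterm1_int k)]
      refine Finset.sum_congr rfl fun k hk => ?_
      have := (hkind1 k).integral_mul_eq_mul_integral (hIint k).aestronglyMeasurable (hSkint k).aestronglyMeasurable
      calc ∫ ω, I k ω * S k ω ∂P = (∫ ω, I k ω ∂P) * ∫ ω, S k ω ∂P := this
        _ = _ := by rw [hIval k, hprob k hk, hSkmean k]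
    -- second moment of X
    have hEX2 : ∫ ω, (X^2 : Ω → ℝ) ω ∂P = ∑ k ∈ Finset.Icc 1 m,
        (2 * ((m:ℝ)+2) / (m:ℝ) * (1/(((k:ℝ)+1)*((k:ℝ)+2))))
          * ((∑ i ∈ Finset.Icc (k+1) (m+1), (1/(i:ℝ))^2)
             + (∑ i ∈ Finset.Icc (k+1) (m+1), 1/(i:ℝ))^2) := by
      rw [hX2eq, integral_finset_sum _ (fun k _ => hterm2_int k)]
      refine Finset.sum_congr rfl fun k hk => ?_
      have := (hkind2 k).integral_mul_eq_mul_integral (hIint k).aestronglyMeasurable (hSksq_int k).aestronglyMeasurable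
      calc ∫ ω, I k ω * S k ω ^ 2 ∂P = (∫ ω, I k ω ∂P) * ∫ ω, S k ω ^ 2 ∂P := this
        _ = _ := by rw [hIval k, hprob k hk, hSksq_val k]
    -- variance formula
    obtain ⟨eA, eB, eC, eD⟩ := sums_closed m hm1
    have h1m : 1 ≤ m + 1 := by omega
    have tail : ∀ (f : ℕ → ℝ) (k : ℕ), k ≤ m+1 →
        ∑ i ∈ Finset.Icc (k+1) (m+1), f i
          = (∑ i ∈ Finset.Icc 1 (m+1), f i) - ∑ i ∈ Finset.Icc 1 k, f i := by
      intro f k hk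
      have h0 := Finset.sum_Ioc_consecutive f (Nat.zero_le k) hk
      simp only [← Finset.Icc_add_one_left_eq_Ioc, Nat.zero_add] at h0
      linarith
    set c : ℝ := 2 * ((m:ℝ)+2) / (m:ℝ) with hc
    set HA : ℝ := ∑ i ∈ Finset.Icc 1 (m+1), (1:ℝ)/(i:ℝ) with hHA
    set HB : ℝ := ∑ i ∈ Finset.Icc 1 (m+1), (1:ℝ)/(i:ℝ)^2 with hHB
    have hQ2 : ∀ k : ℕ, ∑ i ∈ Finset.Icc (k+1) (m+1), (1/(i:ℝ))^2
        = ∑ i ∈ Finset.Icc (k+1) (m+1), (1:ℝ)/(i:ℝ)^2 := by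
      intro k
      exact Finset.sum_congr rfl fun i _ => by rw [div_pow, one_pow]
    have hE1 : ∑ k ∈ Finset.Icc 1 m,
        (c * (1/(((k:ℝ)+1)*((k:ℝ)+2)))) * (∑ i ∈ Finset.Icc (k+1) (m+1), 1/(i:ℝ))
        = (c*HA) * (∑ k ∈ Finset.Icc 1 m, (1:ℝ)/(((k:ℝ)+1)*((k:ℝ)+2)))
          + (-c) * (∑ k ∈ Finset.Icc 1 m, (1:ℝ)/(((k:ℝ)+1)*((k:ℝ)+2)) * (∑ i ∈ Finset.Icc 1 k, (1:ℝ)/i))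
          + 0 * (∑ k ∈ Finset.Icc 1 m, (1:ℝ)/(((k:ℝ)+1)*((k:ℝ)+2)) * (∑ i ∈ Finset.Icc 1 k, (1:ℝ)/(i:ℝ)^2))
          + 0 * (∑ k ∈ Finset.Icc 1 m, (1:ℝ)/(((k:ℝ)+1)*((k:ℝ)+2)) * (∑ i ∈ Finset.Icc 1 k, (1:ℝ)/i)^2) := by
      refine (Finset.sum_congr rfl fun k hk => ?_).trans
        (sum_linear (Finset.Icc 1 m) (fun k => (1:ℝ)/(((k:ℝ)+1)*((k:ℝ)+2)))
          (fun k => ∑ i ∈ Finset.Icc 1 k, (1:ℝ)/i)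
          (fun k => ∑ i ∈ Finset.Icc 1 k, (1:ℝ)/(i:ℝ)^2) (c*HA) (-c) 0 0)
      have hk2 : k ≤ m+1 := by
        have := (Finset.mem_Icc.mp hk).2; omega
      rw [tail (fun i => (1:ℝ)/(i:ℝ)) k hk2, ← hHA]
      ring
    have hE2 : ∑ k ∈ Finset.Icc 1 m,
        (c * (1/(((k:ℝ)+1)*((k:ℝ)+2))))
          * ((∑ i ∈ Finset.Icc (k+1) (m+1), (1/(i:ℝ))^2)
             + (∑ i ∈ Finset.Icc (k+1) (m+1), 1/(i:ℝ))^2)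
        = (c*(HB + HA^2)) * (∑ k ∈ Finset.Icc 1 m, (1:ℝ)/(((k:ℝ)+1)*((k:ℝ)+2)))
          + (-(2*c*HA)) * (∑ k ∈ Finset.Icc 1 m, (1:ℝ)/(((k:ℝ)+1)*((k:ℝ)+2)) * (∑ i ∈ Finset.Icc 1 k, (1:ℝ)/i))
          + (-c) * (∑ k ∈ Finset.Icc 1 m, (1:ℝ)/(((k:ℝ)+1)*((k:ℝ)+2)) * (∑ i ∈ Finset.Icc 1 k, (1:ℝ)/(i:ℝ)^2))
          + c * (∑ k ∈ Finset.Icc 1 m, (1:ℝ)/(((k:ℝ)+1)*((k:ℝ)+2)) * (∑ i ∈ Finset.Icc 1 k, (1:ℝ)/i)^2) := by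
      refine (Finset.sum_congr rfl fun k hk => ?_).trans
        (sum_linear (Finset.Icc 1 m) (fun k => (1:ℝ)/(((k:ℝ)+1)*((k:ℝ)+2)))
          (fun k => ∑ i ∈ Finset.Icc 1 k, (1:ℝ)/i)
          (fun k => ∑ i ∈ Finset.Icc 1 k, (1:ℝ)/(i:ℝ)^2) (c*(HB + HA^2)) (-(2*c*HA)) (-c) c)
      have hk2 : k ≤ m+1 := by
        have := (Finset.mem_Icc.mp hk).2; omega
      rw [hQ2 k, tail (fun i => (1:ℝ)/(i:ℝ)^2) k hk2, tail (fun i => (1:ℝ)/(i:ℝ)) k hk2,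
        ← hHA, ← hHB]
      ring
    rw [eA, eB, eC, eD] at hE1 hE2
    rw [variance_eq_sub hXmem, hEX, hEX2, hE1, hE2]
    rw [hHA, hHB]
    simp only [Finset.sum_Icc_succ_top h1m]
    have hm0 : (m:ℝ) ≠ 0 := by linarith
    have hmm1 : ((m:ℝ)+1) ≠ 0 := by positivity
    have hmm2 : ((m:ℝ)+2) ≠ 0 := by positivity
    push_cast
    rw [hc]
    simp only [add_sub_cancel_right]
    field_simp
    ring
  · exact limit_part
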